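/- In the super Yangian Y_{m|n} over a field of characteristic p > 2, the odd Gaussian generators satisfy [e_m^{(r)}, e_m^{(s)}] = 0 for all r, s > 0; in particular (e_m^{(r)})^2 = 0 for all r > 0. -/

import Mathlib

noncomputable def inU {A : Type*} [Semiring A] (f : ℕ → A) : MvPowerSeries (Fin 2) A :=
  fun d => if d 1 = 0 then f (d 0) else 0

noncomputable def inV {A : Type*} [Semiring A] (f : ℕ → A) : MvPowerSeries (Fin 2) A :=
  fun d => if d 0 = 0 then f (d 1) else 0

noncomputable def cf2 {A : Type*} [Semiring A] (F : MvPowerSeries (Fin 2) A) (a b : ℕ) : A :=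
  MvPowerSeries.coeff (Finsupp.single 0 a + Finsupp.single 1 b) F

section aux

variable {A : Type*} [Semiring A]

lemma fin2_eq (x : Fin 2 →₀ ℕ) : x = Finsupp.single 0 (x 0) + Finsupp.single 1 (x 1) := by
  ext i
  fin_cases i <;> simp [Finsupp.single_apply]

lemma cf2_UV (f g : ℕ → A) (a b : ℕ) : cf2 (inU f * inV g) a b = f a * g b := by
  classical
  rw [cf2, MvPowerSeries.coeff_mul]
  rw [Finset.sum_eq_single (Finsupp.single 0 a, Finsupp.single (1 : Fin 2) b)]
  · simp [inU, inV, MvPowerSeries.coeff_apply, Finsupp.single_apply]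
  · rintro ⟨x, y⟩ hmem hne
    rw [Finset.HasAntidiagonal.mem_antidiagonal] at hmem
    by_cases hx : x 1 = 0
    · by_cases hy : y 0 = 0
      · exfalso
        apply hne
        have h0 := DFunLike.congr_fun hmem 0
        have h1 := DFunLike.congr_fun hmem 1
        simp [Finsupp.add_apply, Finsupp.single_apply, hy] at h0
        simp [Finsupp.add_apply, Finsupp.single_apply, hx] at h1
        have hxe : x = Finsupp.single 0 a := by
          rw [fin2_eq x, hx, h0]; simp
        have hye : y = Finsupp.single 1 b := by
          rw [fin2_eq y, hy, h1]; simp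
        rw [hxe, hye]
      · simp [inU, inV, MvPowerSeries.coeff_apply, hy]
    · simp [inU, inV, MvPowerSeries.coeff_apply, hx]
  · intro h
    refine absurd (Finset.HasAntidiagonal.mem_antidiagonal.mpr ?_) h
    simp

lemma cf2_VU (f g : ℕ → A) (a b : ℕ) : cf2 (inV f * inU g) a b = f b * g a := by
  classical
  rw [cf2, MvPowerSeries.coeff_mul]
  rw [Finset.sum_eq_single (Finsupp.single (1 : Fin 2) b, Finsupp.single 0 a)]
  · simp [inU, inV, MvPowerSeries.coeff_apply, Finsupp.single_apply]
  · rintro ⟨x, y⟩ hmem hne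
    rw [Finset.HasAntidiagonal.mem_antidiagonal] at hmem
    by_cases hx : x 0 = 0
    · by_cases hy : y 1 = 0
      · exfalso
        apply hne
        have h0 := DFunLike.congr_fun hmem 0
        have h1 := DFunLike.congr_fun hmem 1
        simp [Finsupp.add_apply, Finsupp.single_apply, hx] at h0
        simp [Finsupp.add_apply, Finsupp.single_apply, hy] at h1
        have hxe : x = Finsupp.single 1 b := by
          rw [fin2_eq x, hx, h1]; simp
        have hye : y = Finsupp.single 0 a := by
          rw [fin2_eq y, hy, h0]; simp
        rw [hxe, hye]
      · simp [inU, inV, MvPowerSeries.coeff_apply, hy]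
    · simp [inU, inV, MvPowerSeries.coeff_apply, hx]
  · intro h
    refine absurd (Finset.HasAntidiagonal.mem_antidiagonal.mpr ?_) h
    simp [add_comm]

lemma cf2_UU (f g : ℕ → A) (a b : ℕ) :
    cf2 (inU f * inU g) a b =
      if b = 0 then ∑ p ∈ Finset.HasAntidiagonal.antidiagonal a, f p.1 * g p.2 else 0 := by
  classical
  rw [cf2, MvPowerSeries.coeff_mul]
  split_ifs with hb
  · subst hb
    rw [show Finsupp.single (0 : Fin 2) a + Finsupp.single (1 : Fin 2) 0 =
        Finsupp.single 0 a by simp]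
    rw [Finsupp.antidiagonal_single, Finset.sum_map]
    apply Finset.sum_congr rfl
    intro p _
    simp [inU, MvPowerSeries.coeff_apply, Finsupp.single_apply]
  · apply Finset.sum_eq_zero
    rintro ⟨x, y⟩ hmem
    rw [Finset.HasAntidiagonal.mem_antidiagonal] at hmem
    have h1 := DFunLike.congr_fun hmem 1
    simp [Finsupp.add_apply, Finsupp.single_apply] at h1
    by_cases hx : x 1 = 0
    · have hy : y 1 ≠ 0 := by omega
      simp [inU, MvPowerSeries.coeff_apply, hy]
    · simp [inU, MvPowerSeries.coeff_apply, hx]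

lemma cf2_VV (f g : ℕ → A) (a b : ℕ) :
    cf2 (inV f * inV g) a b =
      if a = 0 then ∑ p ∈ Finset.HasAntidiagonal.antidiagonal b, f p.1 * g p.2 else 0 := by
  classical
  rw [cf2, MvPowerSeries.coeff_mul]
  split_ifs with ha
  · subst ha
    rw [show Finsupp.single (0 : Fin 2) 0 + Finsupp.single (1 : Fin 2) b =
        Finsupp.single 1 b by simp]
    rw [Finsupp.antidiagonal_single, Finset.sum_map]
    apply Finset.sum_congr rfl
    intro p _
    simp [inV, MvPowerSeries.coeff_apply, Finsupp.single_apply]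
  · apply Finset.sum_eq_zero
    rintro ⟨x, y⟩ hmem
    rw [Finset.HasAntidiagonal.mem_antidiagonal] at hmem
    have h0 := DFunLike.congr_fun hmem 0
    simp [Finsupp.add_apply, Finsupp.single_apply] at h0
    by_cases hx : x 0 = 0
    · have hy : y 0 ≠ 0 := by omega
      simp [inV, MvPowerSeries.coeff_apply, hy]
    · simp [inV, MvPowerSeries.coeff_apply, hx]

lemma cf2_add (F G : MvPowerSeries (Fin 2) A) (a b : ℕ) :
    cf2 (F + G) a b = cf2 F a b + cf2 G a b := by
  simp [cf2]

lemma cf2_sub {A : Type*} [Ring A] (F G : MvPowerSeries (Fin 2) A) (a b : ℕ) :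
    cf2 (F - G) a b = cf2 F a b - cf2 G a b := by
  simp [cf2]

end aux

/-- in the super Yangian Y_{m|n} over a field of characteristic p > 2, the
odd Gaussian generators satisfy [e_m^{(r)}, e_m^{(s)}] = 0 (supercommutator of odd
elements, i.e. e_m^{(r)} e_m^{(s)} + e_m^{(s)} e_m^{(r)} = 0) for all r,s > 0; in
particular (e_m^{(r)})² = 0 for all r > 0.  The hypothesis is the defining relation
(u−v)[e_m(u), e_m(v)] = −(e_m(u) − e_m(v))² (since |m+1| = 1), expressed
coefficientwise; the Yangian is a k-algebra over the base field k. -/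
theorem odd_e_square_zero
    (k : Type*) [Field k] (p : ℕ) [CharP k p] (hp : 2 < p)
    (A : Type*) [Ring A] [Algebra k A]
    (e : ℕ → A) (he0 : e 0 = 0)
    (hrel : ∀ a b : ℕ,
      cf2 (inU e * inV e + inV e * inU e) (a+1) b -
        cf2 (inU e * inV e + inV e * inU e) a (b+1) =
      - cf2 ((inU e - inV e) * (inU e - inV e)) a b) :
    (∀ r s : ℕ, 0 < r → 0 < s → e r * e s + e s * e r = 0) ∧
    (∀ r : ℕ, 0 < r → e r * e r = 0) := by
  classical
  -- 2 is cancelable in A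
  have two_ne : (2 : k) ≠ 0 := by
    intro h
    have := (CharP.cast_eq_zero_iff k p 2).mp (by exact_mod_cast h)
    have := Nat.le_of_dvd (by norm_num) this
    omega
  have two_cancel : ∀ x : A, x + x = 0 → x = 0 := by
    intro x hx
    have h2 : (2 : k) • x = 0 := by
      rw [show (2 : k) = 1 + 1 by norm_num, add_smul, one_smul]
      exact hx
    have := congrArg (fun y => (2 : k)⁻¹ • y) h2
    simpa [smul_smul, inv_mul_cancel₀ two_ne] using this
  set S : ℕ → ℕ → A := fun a b => e a * e b + e b * e a with hS
  set C : ℕ → A := fun a => ∑ p ∈ Finset.HasAntidiagonal.antidiagonal a, e p.1 * e p.2 with hC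
  have hSsymm : ∀ a b, S a b = S b a := by
    intro a b; simp [hS, add_comm]
  have hS0 : ∀ a, S a 0 = 0 := by
    intro a; simp [hS, he0]
  have hS0' : ∀ b, S 0 b = 0 := by
    intro b; simp [hS, he0]
  have expand : (inU e - inV e) * (inU e - inV e) =
      inU e * inU e - inU e * inV e - (inV e * inU e - inV e * inV e) := by
    noncomm_ring
  -- the relation in terms of S and C
  have R : ∀ a b : ℕ, S (a+1) b - S a (b+1) =
      S a b - (if b = 0 then C a else 0) - (if a = 0 then C b else 0) := by
    intro a b
    have h := hrel a b
    rw [expand] at h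
    rw [cf2_add, cf2_add, cf2_sub, cf2_sub, cf2_sub, cf2_UV, cf2_UV, cf2_VU, cf2_VU,
      cf2_UU, cf2_VV, cf2_UV, cf2_VU] at h
    simp only [hS, hC]
    rw [h]
    abel
  have hC0 : C 0 = 0 := by
    simp [hC, he0]
  -- S a 1 = C a
  have hSa1 : ∀ a, S a 1 = C a := by
    intro a
    have h := R a 0
    rw [hS0, hS0] at h
    rcases Nat.eq_zero_or_pos a with rfl | ha
    · rw [hS0', hC0]
    · rw [if_pos rfl, if_neg (by omega)] at h
      simp only [zero_sub, sub_zero] at h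
      exact neg_injective h
  -- S 1 b = -C b for b ≥ 1
  have hS1b : ∀ b, 0 < b → S 1 b = -C b := by
    intro b hb
    have h := R 0 b
    rw [hS0', hS0'] at h
    rw [if_neg (by omega), if_pos rfl] at h
    simpa using h
  -- C vanishes
  have hCzero : ∀ a, C a = 0 := by
    intro a
    rcases Nat.eq_zero_or_pos a with rfl | ha
    · exact hC0
    · apply two_cancel
      have h1 : C a = S a 1 := (hSa1 a).symm
      have h2 : S 1 a = -C a := hS1b a ha
      rw [hSsymm a 1] at h1
      have h3 : C a = -C a := h1.trans h2
      nth_rewrite 1 [h3]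
      exact neg_add_cancel _
  -- S 1 b = 0 for all b
  have hS1 : ∀ b, S 1 b = 0 := by
    intro b
    rcases Nat.eq_zero_or_pos b with rfl | hb
    · exact hS0 1
    · rw [hS1b b hb, hCzero]; simp
  -- main induction
  have main : ∀ a, 0 < a → ∀ b, 0 < b → S a b = 0 := by
    intro a
    induction a with
    | zero => intro h; omega
    | succ a ih =>
      intro _ b hb
      rcases Nat.eq_zero_or_pos a with rfl | ha
      · exact hS1 b
      · have h := R a b
        rw [if_neg (by omega), if_neg (by omega)] at h
        rw [ih ha (b+1) (by omega), ih ha b hb] at h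
        simpa using h
  constructor
  · intro r s hr hs
    exact main r hr s hs
  · intro r hr
    exact two_cancel _ (main r hr r hr)
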